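/- Let 𝒜 be a compact H-set of positive N×N matrices, ν : ℝᴺ → ℝ a coordinate-wise monotone (non-decreasing in each coordinate on the nonnegative orthant) function, and x > 0 a vector. Then there exists A_max ∈ 𝒜 with A x ≤ A_max x for all A ∈ 𝒜, and max_{A ∈ 𝒜} ν(Ax) = ν(A_max x). -/

import Mathlib

/-- A vector is positive if all its coordinates are strictly positive. -/
def PosVec {M : ℕ} (x : Fin M → ℝ) : Prop := ∀ j, 0 < x j

/-- A matrix is positive if all its entries are strictly positive. -/
def PosMat {N M : ℕ} (A : Matrix (Fin N) (Fin M) ℝ) : Prop := ∀ i j, 0 < A i j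

/-- The hourglass alternative: a set of matrices is an H-set if for every
matrix `At` in the set and every positive vector `x`, assertions H1 and H2 hold. -/
def IsHSet {N M : ℕ} (𝒜 : Set (Matrix (Fin N) (Fin M) ℝ)) : Prop :=
  ∀ At ∈ 𝒜, ∀ x : Fin M → ℝ, PosVec x →
    ((∀ A ∈ 𝒜, At.mulVec x ≤ A.mulVec x) ∨
      ∃ Ab ∈ 𝒜, Ab.mulVec x ≤ At.mulVec x ∧ Ab.mulVec x ≠ At.mulVec x) ∧
    ((∀ A ∈ 𝒜, A.mulVec x ≤ At.mulVec x) ∨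
      ∃ Ab ∈ 𝒜, At.mulVec x ≤ Ab.mulVec x ∧ Ab.mulVec x ≠ At.mulVec x)

/-- A function `ν : ℝᴺ → ℝ` is coordinate-wise monotone (on the nonnegative
orthant). -/
def CWMonotone {N : ℕ} (ν : (Fin N → ℝ) → ℝ) : Prop :=
  ∀ u v : Fin N → ℝ, 0 ≤ u → u ≤ v → ν u ≤ ν v

/-- One-step maximization: for a compact H-set of positive matrices, a
coordinate-wise monotone `ν` and a positive vector `x`, there is `Amax ∈ 𝒜`
with `A x ≤ Amax x` for all `A ∈ 𝒜`, and `ν (A x)` attains its maximum over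
`𝒜` at `Amax`. -/
theorem one_step_max {N : ℕ} (𝒜 : Set (Matrix (Fin N) (Fin N) ℝ))
    (hne : 𝒜.Nonempty) (hpos : ∀ A ∈ 𝒜, PosMat A) (hH : IsHSet 𝒜)
    (hcomp : IsCompact 𝒜) (ν : (Fin N → ℝ) → ℝ) (hν : CWMonotone ν)
    (x : Fin N → ℝ) (hx : PosVec x) :
    ∃ Amax ∈ 𝒜, (∀ A ∈ 𝒜, A.mulVec x ≤ Amax.mulVec x) ∧
      IsGreatest {r | ∃ A ∈ 𝒜, r = ν (A.mulVec x)} (ν (Amax.mulVec x)) := by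
  -- maximize the sum of coordinates of A x over the compact set 𝒜
  have hcont : ContinuousOn (fun A : Matrix (Fin N) (Fin N) ℝ =>
      ∑ i, (A.mulVec x) i) 𝒜 := by
    apply Continuous.continuousOn
    apply continuous_finset_sum
    intro i _
    simp only [Matrix.mulVec, dotProduct]
    apply continuous_finset_sum
    intro j _
    exact (((continuous_apply j).comp (continuous_apply (A := fun _ : Fin N => Fin N → ℝ) i)).mul continuous_const)
  obtain ⟨Amax, hAmem, hAmax⟩ := hcomp.exists_isMaxOn hne hcont
  have hdom : ∀ A ∈ 𝒜, A.mulVec x ≤ Amax.mulVec x := by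
    rcases (hH Amax hAmem x hx).2 with h | ⟨Ab, hAb, hle, hne'⟩
    · exact h
    · exfalso
      have hlt : ∑ i, (Amax.mulVec x) i < ∑ i, (Ab.mulVec x) i := by
        obtain ⟨i, hi⟩ : ∃ i, Amax.mulVec x i ≠ Ab.mulVec x i := by
          by_contra h
          push_neg at h
          exact hne' (funext fun i => (h i).symm)
        exact Finset.sum_lt_sum (fun j _ => hle j)
          ⟨i, Finset.mem_univ i, lt_of_le_of_ne (hle i) hi⟩
      exact absurd (hAmax hAb) (not_le.mpr hlt)
  refine ⟨Amax, hAmem, hdom, ?_, ?_⟩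
  · exact ⟨Amax, hAmem, rfl⟩
  · rintro r ⟨A, hA, rfl⟩
    apply hν
    · intro i
      simp only [Matrix.mulVec, dotProduct, Pi.zero_apply]
      exact Finset.sum_nonneg fun j _ => le_of_lt (mul_pos (hpos A hA i j) (hx j))
    · exact hdom A hA
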